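/- Let E be a measurable space and μ a probability measure on ℝ × E (interpreted as the joint law of (Y, Z)), with marginal μ_Z on E; assume ∫ |y| dμ(y, z) < ∞. Suppose there exist a constant M̄ ≥ 0 and a measurable function m : E → ℝ with |m(z)| ≤ M̄ for all z, such that ∫ y·ψ(z) dμ(y, z) = ∫ m(z)·ψ(z) dμ_Z(z) for every bounded measurable ψ : E → ℝ. Let δ > 0, C > 0, and let g, φ : E → ℝ be measurable with |φ(x) − g(x)| ≤ δ for all x ∈ E, and suppose the cumulative distribution function of the pushforward of μ_Z under g is C-Lipschitz. Define D(z₁, z₂) := 1{φ(z₁) > φ(z₂)} − 1{g(z₁) > g(z₂)} and ν(y, z) := y·∫ D(z, z′) dμ_Z(z′) + ∫ y′·D(z′, z) dμ(y′, z′) − 2·∫∫ y₁·D(z₁, z₂) dμ(y₁, z₁) dμ_Z(z₂). Then |ν(y, z)| ≤ 4Cδ·(|y| + 3M̄) for all (y, z) ∈ ℝ × E. -/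

import Mathlib

open MeasureTheory

/-- Lemma B.1(i): the Hájek projection `ν` of the rank-criterion kernel is bounded by
`4Cδ·(|y| + 3Mbar)` uniformly over candidate functions `φ` in a sup-norm `δ`-ball around
`g`, when the cdf of `g(Z)` is `C`-Lipschitz and the conditional mean `m` of `Y` given
`Z` is bounded by `Mbar`. -/
theorem stmt_14 {E : Type*} [MeasurableSpace E]
    (μ : Measure (ℝ × E)) [IsProbabilityMeasure μ]
    (μZ : Measure E) (hμZ : μZ = μ.map Prod.snd)
    (hYint : Integrable (fun p : ℝ × E => p.1) μ)
    (Mbar : ℝ) (hMbar : 0 ≤ Mbar)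
    (mfun : E → ℝ) (hmmeas : Measurable mfun) (hmbd : ∀ z : E, |mfun z| ≤ Mbar)
    (hmrep : ∀ ψ : E → ℝ, Measurable ψ → (∃ Cψ : ℝ, ∀ z : E, |ψ z| ≤ Cψ) →
      ∫ p : ℝ × E, p.1 * ψ p.2 ∂μ = ∫ z, mfun z * ψ z ∂μZ)
    (δ C : ℝ) (hδ : 0 < δ) (hC : 0 < C)
    (g φ : E → ℝ) (hg : Measurable g) (hφ : Measurable φ)
    (hclose : ∀ x : E, |φ x - g x| ≤ δ)
    (F : ℝ → ℝ) (hF : ∀ t : ℝ, F t = (μZ {z | g z ≤ t}).toReal)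
    (hLip : ∀ a b : ℝ, |F a - F b| ≤ C * |a - b|)
    (D : E → E → ℝ)
    (hD : ∀ z₁ z₂ : E, D z₁ z₂ =
      (if φ z₂ < φ z₁ then (1 : ℝ) else 0) - (if g z₂ < g z₁ then (1 : ℝ) else 0))
    (ν : ℝ → E → ℝ)
    (hν : ∀ (y : ℝ) (z : E), ν y z =
      y * (∫ z', D z z' ∂μZ) + (∫ p : ℝ × E, p.1 * D p.2 z ∂μ)
        - 2 * ∫ z₂, (∫ p : ℝ × E, p.1 * D p.2 z₂ ∂μ) ∂μZ) :
    ∀ (y : ℝ) (z : E), |ν y z| ≤ 4 * C * δ * (|y| + 3 * Mbar) := by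
  haveI hPZ : IsProbabilityMeasure μZ := by
    rw [hμZ]; exact Measure.isProbabilityMeasure_map measurable_snd.aemeasurable
  -- measurability of the "band" sets
  have hSmeas : ∀ t : ℝ, MeasurableSet {x : E | |g x - t| ≤ 2 * δ} := fun t =>
    measurableSet_le ((hg.sub measurable_const).abs) measurable_const
  -- measure of the band is at most 4Cδ
  have hmeasure : ∀ t : ℝ, (μZ {x | |g x - t| ≤ 2 * δ}).toReal ≤ 4 * C * δ := by
    intro t
    refine le_of_forall_pos_le_add ?_
    intro ε hε
    set ε' := ε / C with hε'
    have hε'pos : 0 < ε' := div_pos hε hC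
    have hdisj : Disjoint {x : E | |g x - t| ≤ 2 * δ} {x : E | g x ≤ t - 2 * δ - ε'} := by
      rw [Set.disjoint_left]
      intro x hx hx'
      simp only [Set.mem_setOf_eq] at hx hx'
      have := abs_le.mp hx
      linarith [this.1]
    have key : μZ {x : E | |g x - t| ≤ 2 * δ} + μZ {x : E | g x ≤ t - 2 * δ - ε'}
        ≤ μZ {x : E | g x ≤ t + 2 * δ} := by
      rw [← measure_union hdisj (measurableSet_le hg measurable_const)]
      apply measure_mono
      rintro x (hx | hx) <;> simp only [Set.mem_setOf_eq] at hx ⊢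
      · linarith [(abs_le.mp hx).2]
      · linarith
    have h1 : (μZ {x : E | |g x - t| ≤ 2 * δ}).toReal
        + (μZ {x : E | g x ≤ t - 2 * δ - ε'}).toReal
        ≤ (μZ {x : E | g x ≤ t + 2 * δ}).toReal := by
      rw [← ENNReal.toReal_add (measure_ne_top _ _) (measure_ne_top _ _)]
      exact ENNReal.toReal_mono (measure_ne_top _ _) key
    have h2 : (μZ {x : E | |g x - t| ≤ 2 * δ}).toReal ≤ F (t + 2 * δ) - F (t - 2 * δ - ε') := by
      rw [hF, hF]; linarith
    have h3 : |F (t + 2 * δ) - F (t - 2 * δ - ε')| ≤ C * |(t + 2 * δ) - (t - 2 * δ - ε')| :=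
      hLip _ _
    have h4 : |(t + 2 * δ) - (t - 2 * δ - ε')| = 4 * δ + ε' := by
      rw [abs_of_nonneg (by linarith)]; ring
    have h5 : C * ε' = ε := by rw [hε']; field_simp [hC.ne']
    have h6 : F (t + 2 * δ) - F (t - 2 * δ - ε') ≤ C * (4 * δ + ε') := by
      calc F (t + 2 * δ) - F (t - 2 * δ - ε') ≤ |F (t + 2 * δ) - F (t - 2 * δ - ε')| :=
            le_abs_self _
        _ ≤ C * |(t + 2 * δ) - (t - 2 * δ - ε')| := h3
        _ = C * (4 * δ + ε') := by rw [h4]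
    nlinarith
  -- pointwise bound on D
  have hD1 : ∀ a b : E, |D a b| ≤ 1 := by
    intro a b; rw [hD]; split_ifs <;> norm_num
  have hDbound : ∀ a b : E, |D a b| ≤
      Set.indicator {x : E | |g x - g b| ≤ 2 * δ} (fun _ => (1 : ℝ)) a := by
    intro a b
    simp only [Set.indicator_apply, Set.mem_setOf_eq]
    rcases le_or_gt (|g a - g b|) (2 * δ) with hm | hm
    · rw [if_pos hm]
      exact hD1 a b
    · rw [if_neg hm.not_ge]
      have hca := abs_le.mp (hclose a)
      have hcb := abs_le.mp (hclose b)
      have hab : (φ b < φ a) ↔ (g b < g a) := by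
        constructor
        · intro h; by_contra h'; push_neg at h'
          have : |g a - g b| ≤ 2 * δ := by
            rw [abs_le]; constructor <;> linarith
          linarith
        · intro h; by_contra h'; push_neg at h'
          have : |g a - g b| ≤ 2 * δ := by
            rw [abs_le]; constructor <;> linarith
          linarith
      rw [hD]
      by_cases h1 : φ b < φ a
      · rw [if_pos h1, if_pos (hab.mp h1)]; simp
      · rw [if_neg h1, if_neg (fun h => h1 (hab.mpr h))]; simp
  have hDbound2 : ∀ a b : E, |D a b| ≤
      Set.indicator {x : E | |g x - g a| ≤ 2 * δ} (fun _ => (1 : ℝ)) b := by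
    intro a b
    have h := hDbound a b
    simp only [Set.indicator_apply, Set.mem_setOf_eq] at h ⊢
    have hiff : |g b - g a| ≤ 2 * δ ↔ |g a - g b| ≤ 2 * δ := by rw [abs_sub_comm]
    rwa [if_congr hiff rfl rfl]
  -- measurability of D in each argument
  have hDmeas1 : ∀ b : E, Measurable (fun a => D a b) := by
    intro b
    simp only [hD]
    exact (Measurable.ite (measurableSet_lt measurable_const hφ) measurable_const
      measurable_const).sub
      (Measurable.ite (measurableSet_lt measurable_const hg) measurable_const measurable_const)
  have hDmeas2 : ∀ a : E, Measurable (fun b => D a b) := by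
    intro a
    simp only [hD]
    exact (Measurable.ite (measurableSet_lt hφ measurable_const) measurable_const
      measurable_const).sub
      (Measurable.ite (measurableSet_lt hg measurable_const) measurable_const measurable_const)
  have hIntindic : ∀ t : ℝ,
      Integrable (Set.indicator {x : E | |g x - t| ≤ 2 * δ} (fun _ => (1 : ℝ))) μZ :=
    fun t => (integrable_const 1).indicator (hSmeas t)
  have hindint : ∀ t : ℝ,
      ∫ a, Set.indicator {x : E | |g x - t| ≤ 2 * δ} (fun _ => (1 : ℝ)) a ∂μZ
        = (μZ {x : E | |g x - t| ≤ 2 * δ}).toReal := by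
    intro t
    rw [integral_indicator_const (1 : ℝ) (hSmeas t)]
    simp
    rfl
  -- Term 1 : |∫ D z z' dμZ(z')| ≤ 4Cδ
  have hT1 : ∀ z : E, |∫ z', D z z' ∂μZ| ≤ 4 * C * δ := by
    intro z
    have hInt : Integrable (fun z' => D z z') μZ :=
      (integrable_const 1).mono' (hDmeas2 z).aestronglyMeasurable
        (ae_of_all _ fun a => by rw [Real.norm_eq_abs]; exact hD1 z a)
    have habs : |∫ z', D z z' ∂μZ| ≤ ∫ z', |D z z'| ∂μZ := by
      simpa [Real.norm_eq_abs] using norm_integral_le_integral_norm (fun z' => D z z')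
        (μ := μZ)
    refine habs.trans ?_
    calc ∫ z', |D z z'| ∂μZ
        ≤ ∫ z', Set.indicator {x : E | |g x - g z| ≤ 2 * δ} (fun _ => (1 : ℝ)) z' ∂μZ :=
          integral_mono hInt.abs (hIntindic (g z)) (fun z' => hDbound2 z z')
      _ = (μZ {x : E | |g x - g z| ≤ 2 * δ}).toReal := hindint (g z)
      _ ≤ 4 * C * δ := hmeasure (g z)
  -- Term 2 : |∫ y' D(z', z) dμ| ≤ 4CδMbar
  have hB : ∀ z : E, |∫ p : ℝ × E, p.1 * D p.2 z ∂μ| ≤ 4 * C * δ * Mbar := by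
    intro z
    rw [hmrep (fun a => D a z) (hDmeas1 z) ⟨1, fun a => hD1 a z⟩]
    have hIntmD : Integrable (fun a => mfun a * D a z) μZ :=
      (integrable_const Mbar).mono' ((hmmeas.mul (hDmeas1 z)).aestronglyMeasurable)
        (ae_of_all _ fun a => by
          rw [Real.norm_eq_abs, abs_mul]
          calc |mfun a| * |D a z| ≤ Mbar * 1 :=
                mul_le_mul (hmbd a) (hD1 a z) (abs_nonneg _) hMbar
            _ = Mbar := mul_one _)
    have habs : |∫ a, mfun a * D a z ∂μZ| ≤ ∫ a, |mfun a * D a z| ∂μZ := by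
      have := norm_integral_le_integral_norm (fun a => mfun a * D a z) (μ := μZ)
      simp only [Real.norm_eq_abs] at this
      exact this
    refine habs.trans ?_
    calc ∫ a, |mfun a * D a z| ∂μZ
        ≤ ∫ a, Mbar * Set.indicator {x : E | |g x - g z| ≤ 2 * δ} (fun _ => (1 : ℝ)) a ∂μZ := by
          refine integral_mono hIntmD.abs ((hIntindic (g z)).const_mul Mbar) (fun a => ?_)
          rw [abs_mul]
          exact mul_le_mul (hmbd a) (hDbound a z) (abs_nonneg _) hMbar
      _ = Mbar * (μZ {x : E | |g x - g z| ≤ 2 * δ}).toReal := by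
          rw [integral_const_mul, hindint (g z)]
      _ ≤ Mbar * (4 * C * δ) :=
          mul_le_mul_of_nonneg_left (hmeasure (g z)) hMbar
      _ = 4 * C * δ * Mbar := by ring
  -- Term 3
  have hT3 : |∫ z₂, (∫ p : ℝ × E, p.1 * D p.2 z₂ ∂μ) ∂μZ| ≤ 4 * C * δ * Mbar := by
    have := norm_integral_le_of_norm_le_const (μ := μZ)
      (f := fun z₂ => ∫ p : ℝ × E, p.1 * D p.2 z₂ ∂μ) (C := 4 * C * δ * Mbar)
      (ae_of_all _ fun z₂ => by rw [Real.norm_eq_abs]; exact hB z₂)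
    simpa [Real.norm_eq_abs, measure_univ] using this
  -- Conclusion
  intro y z
  rw [hν]
  have h1 : |y * (∫ z', D z z' ∂μZ)| ≤ |y| * (4 * C * δ) := by
    rw [abs_mul]
    exact mul_le_mul_of_nonneg_left (hT1 z) (abs_nonneg y)
  have h2 := hB z
  have habs3 : |2 * ∫ z₂, (∫ p : ℝ × E, p.1 * D p.2 z₂ ∂μ) ∂μZ| ≤ 2 * (4 * C * δ * Mbar) := by
    rw [abs_mul, abs_two]
    exact mul_le_mul_of_nonneg_left hT3 (by norm_num)
  set A := y * (∫ z', D z z' ∂μZ)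
  set B := ∫ p : ℝ × E, p.1 * D p.2 z ∂μ
  set T := 2 * ∫ z₂, (∫ p : ℝ × E, p.1 * D p.2 z₂ ∂μ) ∂μZ
  have htri : |A + B - T| ≤ |A| + |B| + |T| := by
    calc |A + B - T| = |(A + B) + (-T)| := by rw [sub_eq_add_neg]
      _ ≤ |A + B| + |(-T)| := abs_add_le _ _
      _ ≤ (|A| + |B|) + |T| := by
          rw [abs_neg]
          exact add_le_add_left (abs_add_le A B) _
      _ = |A| + |B| + |T| := rfl
  nlinarith [abs_nonneg y, hC.le, hδ.le]
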